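/- Let A : ℝ → ℝ be continuously differentiable, suppose there is a₀ > 0 with A(x) ≤ −a₀ for all x ∈ ℝ, suppose ∫_ℝ (1 + |t|)·|A′(t)| dt < ∞, and let A₊ = lim_{x→+∞} A(x) and A₋ = lim_{x→−∞} A(x). Then there exists a differentiable function r₀ : ℝ → ℝ with r₀(x) > 0 for all x, r₀ bounded on ℝ, satisfying r₀′(x) = A(x)/r₀(x) + 1 for all x ∈ ℝ, and such that r₀(x) → −A₊ = |A₊| as x → +∞ and r₀(x) → −A₋ = |A₋| as x → −∞. -/

import Mathlib

open MeasureTheory Filter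
open MeasureTheory Filter Set Real
open scoped BoundedContinuousFunction

namespace AcousticBH

variable {A : ℝ → ℝ} {a₀ C μ : ℝ}

/-- clamp to `[a₀, C]` -/
noncomputable def proj (a₀ C u : ℝ) : ℝ := max a₀ (min u C)

/-- unclamped map -/
noncomputable def phi0 (A : ℝ → ℝ) (μ t u : ℝ) : ℝ := u - (1 + A t / u) / μ

/-- the (clamped) fixed-point map integrand -/
noncomputable def psi (A : ℝ → ℝ) (a₀ C μ t u : ℝ) : ℝ :=
  phi0 A μ t (proj a₀ C u)

lemma proj_mem (haC : a₀ ≤ C) (u : ℝ) : proj a₀ C u ∈ Icc a₀ C := by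
  constructor
  · exact le_max_left _ _
  · exact max_le haC (min_le_right _ _)

lemma proj_of_mem {u : ℝ} (h : u ∈ Icc a₀ C) : proj a₀ C u = u := by
  rw [proj, min_eq_left h.2, max_eq_right h.1]

lemma proj_lipschitz (u v : ℝ) : |proj a₀ C u - proj a₀ C v| ≤ |u - v| := by
  have h1 : |min u C - min v C| ≤ |u - v| := abs_min_sub_min_le_max .. |>.trans (by
    simp [sub_self, abs_zero] : max |u - v| |C - C| ≤ |u - v|)
  calc |proj a₀ C u - proj a₀ C v| ≤ max |a₀ - a₀| |min u C - min v C| :=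
        abs_max_sub_max_le_max ..
    _ ≤ |u - v| := by simpa using h1

section Psi
variable (hA₀ : 0 < a₀) (haC : a₀ ≤ C) (hμ : C ≤ μ * a₀ ^ 2)
  (hAlb : ∀ t, -C ≤ A t) (hAub : ∀ t, A t ≤ -a₀)

include hA₀ haC hμ in
lemma mu_pos : 0 < μ := by nlinarith

include hA₀ haC hμ hAlb hAub in
lemma factor_bounds {t u v : ℝ} (hu : u ∈ Icc a₀ C) (hv : v ∈ Icc a₀ C) :
    1 + A t / (μ * u * v) ∈ Icc (0:ℝ) (1 - a₀ / (μ * C ^ 2)) := by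
  have hμ0 : 0 < μ := mu_pos hA₀ haC hμ
  have hu0 : 0 < u := lt_of_lt_of_le hA₀ hu.1
  have hv0 : 0 < v := lt_of_lt_of_le hA₀ hv.1
  have hw0 : 0 < μ * u * v := by positivity
  have hC0 : 0 < C := lt_of_lt_of_le hA₀ haC
  have huv : a₀ * a₀ ≤ u * v := mul_le_mul hu.1 hv.1 hA₀.le hu0.le
  have huv' : u * v ≤ C * C := mul_le_mul hu.2 hv.2 hv0.le hC0.le
  constructor
  · have h : -1 ≤ A t / (μ * u * v) := by
      rw [le_div_iff₀ hw0]
      nlinarith [hAlb t, mul_le_mul_of_nonneg_left huv hμ0.le]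
    linarith
  · have h : A t / (μ * u * v) ≤ -(a₀ / (μ * C ^ 2)) := by
      rw [← neg_div, div_le_div_iff₀ hw0 (by positivity)]
      nlinarith [mul_le_mul_of_nonneg_right (hAub t) (by positivity : (0:ℝ) ≤ μ * C ^ 2),
        mul_le_mul_of_nonneg_left huv' (mul_nonneg hμ0.le hA₀.le)]
    linarith

lemma phi0_sub_phi0 (hμ0 : μ ≠ 0) {t u v : ℝ} (hu : u ≠ 0) (hv : v ≠ 0) :
    phi0 A μ t u - phi0 A μ t v = (u - v) * (1 + A t / (μ * u * v)) := by
  unfold phi0; field_simp; ring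

include hA₀ haC hμ hAlb hAub in
lemma phi0_mem {t u : ℝ} (hu : u ∈ Icc a₀ C) : phi0 A μ t u ∈ Icc a₀ C := by
  have hμ0 : 0 < μ := mu_pos hA₀ haC hμ
  have hu0 : 0 < u := lt_of_lt_of_le hA₀ hu.1
  have hC0 : 0 < C := lt_of_lt_of_le hA₀ haC
  have hCm : C ∈ Icc a₀ C := ⟨haC, le_refl _⟩
  have ham : a₀ ∈ Icc a₀ C := ⟨le_refl _, haC⟩
  constructor
  · have h1 : phi0 A μ t u - phi0 A μ t a₀ = (u - a₀) * (1 + A t / (μ * u * a₀)) :=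
      phi0_sub_phi0 hμ0.ne' hu0.ne' hA₀.ne'
    have h2 := factor_bounds hA₀ haC hμ hAlb hAub (t := t) hu ham
    have hd : A t / a₀ ≤ -a₀ / a₀ := by
      apply div_le_div_of_nonneg_right (hAub t) <;> first | exact hA₀ | exact hA₀.le
    rw [neg_div, div_self hA₀.ne'] at hd
    have hle : 1 + A t / a₀ ≤ 0 := by linarith
    have h4 : (1 + A t / a₀) / μ ≤ 0 := div_nonpos_of_nonpos_of_nonneg hle hμ0.le
    have h3 : a₀ ≤ phi0 A μ t a₀ := by unfold phi0; linarith
    nlinarith [h2.1, hu.1]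
  · have h1 : phi0 A μ t u - phi0 A μ t C = (u - C) * (1 + A t / (μ * u * C)) :=
      phi0_sub_phi0 hμ0.ne' hu0.ne' hC0.ne'
    have h2 := factor_bounds hA₀ haC hμ hAlb hAub (t := t) hu hCm
    have hd : -C / C ≤ A t / C := by
      apply div_le_div_of_nonneg_right (hAlb t) <;> first | exact hC0 | exact hC0.le
    rw [neg_div, div_self hC0.ne'] at hd
    have hge : 0 ≤ 1 + A t / C := by linarith
    have h4 : 0 ≤ (1 + A t / C) / μ := div_nonneg hge hμ0.le
    have h3 : phi0 A μ t C ≤ C := by unfold phi0; linarith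
    nlinarith [h2.1, hu.2]

include hA₀ haC hμ hAlb hAub in
lemma psi_mem (t u : ℝ) : psi A a₀ C μ t u ∈ Icc a₀ C :=
  phi0_mem hA₀ haC hμ hAlb hAub (proj_mem haC u)

include hA₀ haC hμ hAlb hAub in
lemma psi_lipschitz (t u v : ℝ) :
    |psi A a₀ C μ t u - psi A a₀ C μ t v| ≤ (1 - a₀ / (μ * C ^ 2)) * |u - v| := by
  have hμ0 : 0 < μ := mu_pos hA₀ haC hμ
  have hpu := proj_mem (a₀ := a₀) haC u
  have hpv := proj_mem (a₀ := a₀) haC v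
  have h1 : psi A a₀ C μ t u - psi A a₀ C μ t v
      = (proj a₀ C u - proj a₀ C v) * (1 + A t / (μ * proj a₀ C u * proj a₀ C v)) :=
    phi0_sub_phi0 hμ0.ne' (lt_of_lt_of_le hA₀ hpu.1).ne' (lt_of_lt_of_le hA₀ hpv.1).ne'
  have h2 := factor_bounds hA₀ haC hμ hAlb hAub (t := t) hpu hpv
  rw [h1, abs_mul, abs_of_nonneg h2.1]
  exact mul_le_mul (proj_lipschitz u v) h2.2 h2.1 (abs_nonneg _) |>.trans_eq (mul_comm _ _)

include hA₀ haC hμ hAlb hAub in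
lemma psi_dist_const (hL : L ∈ Icc a₀ C) (t u : ℝ) :
    |psi A a₀ C μ t u - L| ≤ (1 - a₀ / (μ * C ^ 2)) * |u - L| + |A t + L| / (μ * a₀) := by
  have hμ0 : 0 < μ := mu_pos hA₀ haC hμ
  have hL0 : 0 < L := lt_of_lt_of_le hA₀ hL.1
  have h1 : psi A a₀ C μ t L = L - (L + A t) / (L * μ) := by
    rw [psi, proj_of_mem hL, phi0]
    field_simp
  have h2 : |psi A a₀ C μ t L - L| ≤ |A t + L| / (μ * a₀) := by
    rw [h1]
    have : L - (L + A t) / (L * μ) - L = -((A t + L) / (L * μ)) := by ring_nf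
    rw [this, abs_neg, abs_div, abs_of_pos (by positivity : (0:ℝ) < L * μ)]
    apply div_le_div_of_nonneg_left (abs_nonneg _) (by positivity)
    rw [mul_comm μ a₀]
    exact mul_le_mul_of_nonneg_right hL.1 hμ0.le
  calc |psi A a₀ C μ t u - L|
      ≤ |psi A a₀ C μ t u - psi A a₀ C μ t L| + |psi A a₀ C μ t L - L| := abs_sub_le _ _ _
    _ ≤ (1 - a₀ / (μ * C ^ 2)) * |u - L| + |A t + L| / (μ * a₀) :=
        add_le_add (psi_lipschitz hA₀ haC hμ hAlb hAub t u L) h2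

lemma psi_continuous (hA : Continuous A) (hA₀ : 0 < a₀) :
    Continuous fun p : ℝ × ℝ => psi A a₀ C μ p.1 p.2 := by
  have hp : Continuous fun u : ℝ => proj a₀ C u := by
    unfold proj; fun_prop
  have hpos : ∀ u : ℝ, proj a₀ C u ≠ 0 := fun u =>
    (lt_of_lt_of_le hA₀ (le_max_left _ _)).ne'
  unfold psi phi0
  fun_prop (disch := intros; exact hpos _)
end Psi

section Kernel
variable {μ : ℝ}

lemma expker_integrableOn (hμ0 : 0 < μ) {h : ℝ → ℝ} (hcont : Continuous h) {B : ℝ}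
    (hB : ∀ s, |h s| ≤ B) (c : ℝ) :
    IntegrableOn (fun s => μ * Real.exp (-μ * s) * h s) (Ioi c) := by
  have hB0 : 0 ≤ B := (abs_nonneg _).trans (hB 0)
  apply Integrable.mono (((exp_neg_integrableOn_Ioi c hμ0).const_mul (μ * B)))
  · exact (Continuous.aestronglyMeasurable (by fun_prop)).restrict
  · filter_upwards with s
    have he : 0 < Real.exp (-μ * s) := Real.exp_pos _
    simp only [Real.norm_eq_abs, abs_mul, abs_of_pos hμ0, abs_of_pos he, abs_of_nonneg hB0]
    nlinarith [mul_le_mul_of_nonneg_left (hB s) (by positivity : (0:ℝ) ≤ μ * Real.exp (-μ * s))]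

lemma expker_integral (hμ0 : 0 < μ) (c : ℝ) :
    ∫ s in Ioi c, μ * Real.exp (-μ * s) = Real.exp (-μ * c) := by
  have h1 := MeasureTheory.integral_comp_mul_left_Ioi (fun y => Real.exp (-y)) c hμ0
  simp only [smul_eq_mul, integral_exp_neg_Ioi] at h1
  rw [MeasureTheory.integral_const_mul]
  simp only [neg_mul] at h1 ⊢
  rw [h1, ← mul_assoc, mul_inv_cancel₀ hμ0.ne', one_mul]

lemma expker_integral_mul (hμ0 : 0 < μ) (c K : ℝ) :
    ∫ s in Ioi c, μ * Real.exp (-μ * s) * K = Real.exp (-μ * c) * K := by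
  rw [MeasureTheory.integral_mul_const, expker_integral hμ0]

end Kernel

section Op
variable (hA : Continuous A) (hA₀ : 0 < a₀) (haC : a₀ ≤ C) (hμ : C ≤ μ * a₀ ^ 2)
  (hAlb : ∀ t, -C ≤ A t) (hAub : ∀ t, A t ≤ -a₀)

/-- the fixed point operator, on plain functions -/
noncomputable def Tfun (A : ℝ → ℝ) (a₀ C μ : ℝ) (f : ℝ → ℝ) (x : ℝ) : ℝ :=
  ∫ s in Ioi (0:ℝ), μ * Real.exp (-μ * s) * psi A a₀ C μ (x + s) (f (x + s))

include hA hA₀ haC hμ hAlb hAub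

lemma psi_comp_continuous {f : ℝ → ℝ} (hf : Continuous f) (x : ℝ) :
    Continuous fun s => psi A a₀ C μ (x + s) (f (x + s)) := by
  have h1 : Continuous fun s : ℝ => ((x + s, f (x + s)) : ℝ × ℝ) := by fun_prop
  exact (psi_continuous hA hA₀).comp h1

lemma Tfun_integrableOn {f : ℝ → ℝ} (hf : Continuous f) (x c : ℝ) :
    IntegrableOn (fun s => μ * Real.exp (-μ * s) * psi A a₀ C μ (x + s) (f (x + s))) (Ioi c) := by
  apply expker_integrableOn (mu_pos hA₀ haC hμ) (psi_comp_continuous hA hA₀ haC hμ hAlb hAub hf x)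
    (B := C) (fun s => ?_) c
  have h := psi_mem hA₀ haC hμ hAlb hAub (x + s) (f (x + s))
  rw [abs_of_pos (lt_of_lt_of_le hA₀ h.1)]; exact h.2

lemma Tfun_mem {f : ℝ → ℝ} (hf : Continuous f) (x : ℝ) : Tfun A a₀ C μ f x ∈ Icc a₀ C := by
  have hμ0 : 0 < μ := mu_pos hA₀ haC hμ
  have hint := Tfun_integrableOn hA hA₀ haC hμ hAlb hAub hf x 0
  constructor
  · have := MeasureTheory.setIntegral_mono_on
      (((exp_neg_integrableOn_Ioi (0:ℝ) hμ0).const_mul μ).mul_const a₀) hint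
      measurableSet_Ioi (fun s _ => ?_)
    · calc a₀ = Real.exp (-μ * 0) * a₀ := by simp
        _ = ∫ s in Ioi (0:ℝ), μ * Real.exp (-μ * s) * a₀ := (expker_integral_mul hμ0 0 a₀).symm
        _ ≤ Tfun A a₀ C μ f x := this
    · exact mul_le_mul_of_nonneg_left (psi_mem hA₀ haC hμ hAlb hAub (x+s) (f (x+s))).1
        (by positivity)
  · have := MeasureTheory.setIntegral_mono_on hint
      (((exp_neg_integrableOn_Ioi (0:ℝ) hμ0).const_mul μ).mul_const C)
      measurableSet_Ioi (fun s _ => ?_)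
    · calc Tfun A a₀ C μ f x ≤ ∫ s in Ioi (0:ℝ), μ * Real.exp (-μ * s) * C := this
        _ = Real.exp (-μ * 0) * C := expker_integral_mul hμ0 0 C
        _ = C := by simp
    · exact mul_le_mul_of_nonneg_left (psi_mem hA₀ haC hμ hAlb hAub (x+s) (f (x+s))).2
        (by positivity)

lemma Tfun_continuous {f : ℝ → ℝ} (hf : Continuous f) :
    Continuous (Tfun A a₀ C μ f) := by
  have hμ0 : 0 < μ := mu_pos hA₀ haC hμ
  apply MeasureTheory.continuous_of_dominated (bound := fun s => μ * Real.exp (-μ * s) * C)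
  · intro x
    exact ((continuous_const.mul (by fun_prop)).mul
      (psi_comp_continuous hA hA₀ haC hμ hAlb hAub hf x)).aestronglyMeasurable.restrict
  · intro x
    filter_upwards with s
    have h := psi_mem hA₀ haC hμ hAlb hAub (x + s) (f (x + s))
    rw [Real.norm_eq_abs, abs_mul, abs_mul, abs_of_pos hμ0,
      abs_of_pos (Real.exp_pos _), abs_of_pos (lt_of_lt_of_le hA₀ h.1)]
    exact mul_le_mul_of_nonneg_left h.2 (by positivity)
  · exact ((exp_neg_integrableOn_Ioi (0:ℝ) hμ0).const_mul μ).mul_const C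
  · filter_upwards with s
    have h1 : Continuous fun x : ℝ => ((x + s, f (x + s)) : ℝ × ℝ) := by fun_prop
    exact continuous_const.mul ((psi_continuous hA hA₀).comp h1)

lemma Tfun_dist {f g : ℝ → ℝ} (hf : Continuous f) (hg : Continuous g) {d : ℝ} (hd : 0 ≤ d)
    (hfg : ∀ t, |f t - g t| ≤ d) (x : ℝ) :
    |Tfun A a₀ C μ f x - Tfun A a₀ C μ g x| ≤ (1 - a₀ / (μ * C ^ 2)) * d := by
  have hμ0 : 0 < μ := mu_pos hA₀ haC hμ
  have hk0 : 0 ≤ 1 - a₀ / (μ * C ^ 2) :=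
    (factor_bounds hA₀ haC hμ hAlb hAub (t := 0) ⟨le_refl _, haC⟩ ⟨le_refl _, haC⟩).1.trans
    (factor_bounds hA₀ haC hμ hAlb hAub (t := 0) ⟨le_refl _, haC⟩ ⟨le_refl _, haC⟩).2
  have hsub : Tfun A a₀ C μ f x - Tfun A a₀ C μ g x = ∫ s in Ioi (0:ℝ),
      μ * Real.exp (-μ * s) * (psi A a₀ C μ (x + s) (f (x + s)) - psi A a₀ C μ (x + s) (g (x + s))) := by
    rw [Tfun, Tfun, ← MeasureTheory.integral_sub (Tfun_integrableOn hA hA₀ haC hμ hAlb hAub hf x 0)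
      (Tfun_integrableOn hA hA₀ haC hμ hAlb hAub hg x 0)]
    congr 1; funext s; ring
  rw [hsub, ← Real.norm_eq_abs]
  calc ‖∫ s in Ioi (0:ℝ), μ * Real.exp (-μ * s) *
        (psi A a₀ C μ (x + s) (f (x + s)) - psi A a₀ C μ (x + s) (g (x + s)))‖
      ≤ ∫ s in Ioi (0:ℝ), μ * Real.exp (-μ * s) * ((1 - a₀ / (μ * C ^ 2)) * d) := by
        apply MeasureTheory.norm_integral_le_of_norm_le
          ((((exp_neg_integrableOn_Ioi (0:ℝ) hμ0).const_mul μ).mul_const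
            ((1 - a₀ / (μ * C ^ 2)) * d)))
        filter_upwards with s
        rw [Real.norm_eq_abs, abs_mul, abs_mul, abs_of_pos hμ0, abs_of_pos (Real.exp_pos _)]
        apply mul_le_mul_of_nonneg_left ?_ (by positivity)
        exact (psi_lipschitz hA₀ haC hμ hAlb hAub (x + s) (f (x+s)) (g (x+s))).trans
          (mul_le_mul_of_nonneg_left (hfg (x+s)) hk0)
    _ = Real.exp (-μ * 0) * ((1 - a₀ / (μ * C ^ 2)) * d) := expker_integral_mul hμ0 0 _
    _ = (1 - a₀ / (μ * C ^ 2)) * d := by simp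

end Op

section Fixed
variable {r : ℝ → ℝ}
variable (hA : Continuous A) (hA₀ : 0 < a₀) (haC : a₀ ≤ C) (hμ : C ≤ μ * a₀ ^ 2)
  (hAlb : ∀ t, -C ≤ A t) (hAub : ∀ t, A t ≤ -a₀)
  (hrcont : Continuous r) (hfix : ∀ x, r x = Tfun A a₀ C μ r x)

include hA hA₀ haC hμ hAlb hAub hrcont hfix

lemma r_mem (x : ℝ) : r x ∈ Icc a₀ C := by
  rw [hfix x]; exact Tfun_mem hA hA₀ haC hμ hAlb hAub hrcont x

lemma q_cont : Continuous fun t => psi A a₀ C μ t (r t) := by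
  have h1 : Continuous fun t : ℝ => ((t, r t) : ℝ × ℝ) := by fun_prop
  exact (psi_continuous hA hA₀).comp h1

lemma q_mem (t : ℝ) : psi A a₀ C μ t (r t) ∈ Icc a₀ C := psi_mem hA₀ haC hμ hAlb hAub t (r t)

lemma r_hasDeriv (x : ℝ) : HasDerivAt r (A x / r x + 1) x := by
  have hμ0 : 0 < μ := mu_pos hA₀ haC hμ
  set q : ℝ → ℝ := fun t => psi A a₀ C μ t (r t) with hq
  have hqc : Continuous q := q_cont hA hA₀ haC hμ hAlb hAub hrcont hfix
  have hqB : ∀ t, |q t| ≤ C := fun t => by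
    have h := q_mem hA hA₀ haC hμ hAlb hAub hrcont hfix t
    rw [abs_of_pos (lt_of_lt_of_le hA₀ h.1)]; exact h.2
  set gg : ℝ → ℝ := fun t => μ * Real.exp (-μ * t) * q t with hgg
  have hggc : Continuous gg := by fun_prop
  have hggi : ∀ c : ℝ, IntegrableOn gg (Ioi c) := fun c =>
    expker_integrableOn hμ0 hqc hqB c
  set G : ℝ → ℝ := fun y => ∫ t in Ioi y, gg t with hG
  -- the fixed point identity in translated form
  have hrep : ∀ y : ℝ, r y = Real.exp (μ * y) * G y := by
    intro y
    have htr := (measurePreserving_add_left volume y).setIntegral_preimage_emb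
        (measurableEmbedding_addLeft y) (fun t => Real.exp (μ * y) * gg t) (Ioi y)
    have hpre : (fun s : ℝ => y + s) ⁻¹' (Ioi y) = Ioi 0 := by
      ext s; simp [Set.mem_preimage]
    rw [hpre] at htr
    have heq : ∀ s : ℝ, Real.exp (μ * y) * gg (y + s)
        = μ * Real.exp (-μ * s) * q (y + s) := by
      intro s
      show Real.exp (μ * y) * (μ * Real.exp (-μ * (y + s)) * q (y + s)) = _
      have e1 : -μ * (y + s) = -(μ * y) + -μ * s := by ring
      rw [e1, Real.exp_add, Real.exp_neg]
      field_simp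
    calc r y = ∫ s in Ioi (0:ℝ), μ * Real.exp (-μ * s) * q (y + s) := hfix y
      _ = ∫ s in Ioi (0:ℝ), Real.exp (μ * y) * gg (y + s) := by
          apply setIntegral_congr_fun measurableSet_Ioi
          intro s _; exact (heq s).symm
      _ = ∫ t in Ioi y, Real.exp (μ * y) * gg t := by exact htr
      _ = Real.exp (μ * y) * ∫ t in Ioi y, gg t := by
          rw [MeasureTheory.integral_const_mul]
  -- derivative of G
  have hGd : HasDerivAt G (-(gg x)) x := by
    have hkey : ∀ y ∈ Ioi (x - 1), G y = G (x - 1) - ∫ u in (x-1)..y, gg u := by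
      intro y hy
      have hy' : x - 1 ≤ y := le_of_lt hy
      have hsplit : ∫ t in Ioc (x-1) y ∪ Ioi y, gg t
          = (∫ t in Ioc (x-1) y, gg t) + ∫ t in Ioi y, gg t :=
        MeasureTheory.setIntegral_union (Ioc_disjoint_Ioi (le_refl y)) measurableSet_Ioi
          ((hggi (x-1)).mono_set Ioc_subset_Ioi_self) (hggi y)
      rw [Ioc_union_Ioi_eq_Ioi hy'] at hsplit
      rw [intervalIntegral.integral_of_le hy']
      simp only [hG]
      rw [hsplit]; ring
    have hd2 : HasDerivAt (fun y => G (x - 1) - ∫ u in (x-1)..y, gg u) (-(gg x)) x := by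
      apply HasDerivAt.const_sub
      exact intervalIntegral.integral_hasDerivAt_right (hggc.intervalIntegrable _ _)
        (hggc.stronglyMeasurableAtFilter _ _) hggc.continuousAt
    apply hd2.congr_of_eventuallyEq
    filter_upwards [Ioi_mem_nhds (by linarith : x - 1 < x)] with y hy
    exact hkey y hy
  -- assemble
  have hed : HasDerivAt (fun y => Real.exp (μ * y) * G y)
      (Real.exp (μ * x) * μ * G x + Real.exp (μ * x) * -(gg x)) x := by
    have h1 : HasDerivAt (fun y : ℝ => Real.exp (μ * y)) (Real.exp (μ * x) * μ) x := by
      have := ((hasDerivAt_id x).const_mul μ).exp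
      simpa using this
    exact h1.mul hGd
  have hrx := r_mem hA hA₀ haC hμ hAlb hAub hrcont hfix x
  have hrx0 : 0 < r x := lt_of_lt_of_le hA₀ hrx.1
  have hqx : q x = r x - (1 + A x / r x) / μ := by
    simp only [hq, psi, proj_of_mem hrx, phi0]
  have hval : Real.exp (μ * x) * μ * G x + Real.exp (μ * x) * -(gg x) = A x / r x + 1 := by
    have h1 : Real.exp (μ * x) * G x = r x := (hrep x).symm
    have h2 : Real.exp (μ * x) * gg x = μ * q x := by
      show Real.exp (μ * x) * (μ * Real.exp (-μ * x) * q x) = μ * q x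
      rw [neg_mul, Real.exp_neg]
      field_simp
    have h3 : Real.exp (μ * x) * μ * G x = μ * r x := by
      rw [mul_comm (Real.exp (μ * x)) μ, mul_assoc, h1]
    have h4 : Real.exp (μ * x) * -gg x = -(μ * q x) := by rw [← h2]; ring
    rw [h3, h4, hqx]
    field_simp
    ring
  rw [← hval]
  have hfun : r = fun y => Real.exp (μ * y) * G y := funext hrep
  rw [hfun]
  exact hed

lemma r_dist_le {L : ℝ} (hL : L ∈ Icc a₀ C) (x : ℝ) : |r x - L| ≤ C - a₀ := by
  have h := r_mem hA hA₀ haC hμ hAlb hAub hrcont hfix x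
  rw [abs_le]; constructor <;> [linarith [h.1, hL.2]; linarith [h.2, hL.1]]

lemma diff_integrableOn {L : ℝ} (hL : L ∈ Icc a₀ C) (x c : ℝ) :
    IntegrableOn (fun s => μ * Real.exp (-μ * s) *
      (psi A a₀ C μ (x + s) (r (x + s)) - L)) (Ioi c) := by
  apply expker_integrableOn (mu_pos hA₀ haC hμ)
    (((psi_comp_continuous hA hA₀ haC hμ hAlb hAub hrcont x)).sub continuous_const)
    (B := C - a₀) (fun s => ?_) c
  have h := psi_mem hA₀ haC hμ hAlb hAub (x + s) (r (x + s))
  simp only [Pi.sub_apply]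
  rw [abs_le]; constructor <;> [linarith [h.1, hL.2]; linarith [h.2, hL.1]]

lemma r_sub_const {L : ℝ} (hL : L ∈ Icc a₀ C) (x : ℝ) :
    r x - L = ∫ s in Ioi (0:ℝ), μ * Real.exp (-μ * s) *
      (psi A a₀ C μ (x + s) (r (x + s)) - L) := by
  have hμ0 : 0 < μ := mu_pos hA₀ haC hμ
  have h1 : (L:ℝ) = ∫ s in Ioi (0:ℝ), μ * Real.exp (-μ * s) * L := by
    rw [expker_integral_mul hμ0 0 L]; simp
  have h2 : r x = ∫ s in Ioi (0:ℝ), μ * Real.exp (-μ * s) *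
      psi A a₀ C μ (x + s) (r (x + s)) := hfix x
  rw [h2]
  nth_rewrite 1 [h1]
  rw [← MeasureTheory.integral_sub (Tfun_integrableOn hA hA₀ haC hμ hAlb hAub hrcont x 0)
    (((exp_neg_integrableOn_Ioi (0:ℝ) hμ0).const_mul μ).mul_const L)]
  congr 1; funext s; ring

lemma tail_step_top {L b ε₀ N : ℝ} (hL : L ∈ Icc a₀ C) (hb : 0 ≤ b) (hε₀ : 0 ≤ ε₀)
    (hbb : ∀ x, N ≤ x → |r x - L| ≤ b)
    (hη : ∀ t, N ≤ t → |A t + L| ≤ μ * a₀ * ε₀) (x : ℝ) (hx : N ≤ x) :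
    |r x - L| ≤ (1 - a₀ / (μ * C ^ 2)) * b + ε₀ := by
  have hμ0 : 0 < μ := mu_pos hA₀ haC hμ
  set k := 1 - a₀ / (μ * C ^ 2) with hk
  have hk0 : 0 ≤ k :=
    (factor_bounds hA₀ haC hμ hAlb hAub (t := 0) ⟨le_refl _, haC⟩ ⟨le_refl _, haC⟩).1.trans
    (factor_bounds hA₀ haC hμ hAlb hAub (t := 0) ⟨le_refl _, haC⟩ ⟨le_refl _, haC⟩).2
  rw [r_sub_const hA hA₀ haC hμ hAlb hAub hrcont hfix hL x, ← Real.norm_eq_abs]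
  calc ‖∫ s in Ioi (0:ℝ), μ * Real.exp (-μ * s) *
        (psi A a₀ C μ (x + s) (r (x + s)) - L)‖
      ≤ ∫ s in Ioi (0:ℝ), μ * Real.exp (-μ * s) * (k * b + ε₀) := by
        apply MeasureTheory.norm_integral_le_of_norm_le
          (((exp_neg_integrableOn_Ioi (0:ℝ) hμ0).const_mul μ).mul_const (k * b + ε₀))
        filter_upwards [MeasureTheory.ae_restrict_mem measurableSet_Ioi] with s hs
        rw [Real.norm_eq_abs, abs_mul, abs_mul, abs_of_pos hμ0, abs_of_pos (Real.exp_pos _),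
          mul_assoc, mul_assoc]
        apply mul_le_mul_of_nonneg_left ?_ hμ0.le
        apply mul_le_mul_of_nonneg_left ?_ (Real.exp_pos _).le
        calc |psi A a₀ C μ (x + s) (r (x + s)) - L|
            ≤ k * |r (x + s) - L| + |A (x + s) + L| / (μ * a₀) :=
              psi_dist_const hA₀ haC hμ hAlb hAub hL (x + s) (r (x + s))
          _ ≤ k * b + ε₀ := by
              have h1 := hbb (x + s) (by linarith [mem_Ioi.mp hs])
              have h2 := hη (x + s) (by linarith [mem_Ioi.mp hs])
              have h3 : |A (x + s) + L| / (μ * a₀) ≤ ε₀ := by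
                rw [div_le_iff₀ (by positivity)]
                calc |A (x + s) + L| ≤ μ * a₀ * ε₀ := h2
                  _ = ε₀ * (μ * a₀) := by ring
              exact add_le_add (mul_le_mul_of_nonneg_left h1 hk0) h3
    _ = Real.exp (-μ * 0) * (k * b + ε₀) := expker_integral_mul hμ0 0 _
    _ = k * b + ε₀ := by simp

lemma tail_step_bot {L b ε₀ N R : ℝ} (hL : L ∈ Icc a₀ C) (hb : 0 ≤ b) (hε₀ : 0 ≤ ε₀)
    (hR : 0 < R) (hRe : (C - a₀) * Real.exp (-μ * R) ≤ ε₀)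
    (hbb : ∀ x, x ≤ N → |r x - L| ≤ b)
    (hη : ∀ t, t ≤ N → |A t + L| ≤ μ * a₀ * ε₀) (x : ℝ) (hx : x ≤ N - R) :
    |r x - L| ≤ (1 - a₀ / (μ * C ^ 2)) * b + 2 * ε₀ := by
  have hμ0 : 0 < μ := mu_pos hA₀ haC hμ
  set k := 1 - a₀ / (μ * C ^ 2) with hk
  have hk0 : 0 ≤ k :=
    (factor_bounds hA₀ haC hμ hAlb hAub (t := 0) ⟨le_refl _, haC⟩ ⟨le_refl _, haC⟩).1.trans
    (factor_bounds hA₀ haC hμ hAlb hAub (t := 0) ⟨le_refl _, haC⟩ ⟨le_refl _, haC⟩).2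
  set w := N - x with hw
  have hwR : R ≤ w := by simp [hw]; linarith
  have hw0 : 0 < w := lt_of_lt_of_le hR hwR
  set h : ℝ → ℝ := fun s => μ * Real.exp (-μ * s) *
    (psi A a₀ C μ (x + s) (r (x + s)) - L) with hh
  have hint : ∀ c : ℝ, IntegrableOn h (Ioi c) :=
    fun c => diff_integrableOn hA hA₀ haC hμ hAlb hAub hrcont hfix hL x c
  have hsplit : ∫ s in Ioi (0:ℝ), h s = (∫ s in Ioc 0 w, h s) + ∫ s in Ioi w, h s := by
    rw [← MeasureTheory.setIntegral_union (Ioc_disjoint_Ioi (le_refl w)) measurableSet_Ioi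
      ((hint 0).mono_set Ioc_subset_Ioi_self) (hint w), Ioc_union_Ioi_eq_Ioi hw0.le]
  have hbound1 : |∫ s in Ioc (0:ℝ) w, h s| ≤ k * b + ε₀ := by
    rw [← Real.norm_eq_abs]
    calc ‖∫ s in Ioc (0:ℝ) w, h s‖
        ≤ ∫ s in Ioc (0:ℝ) w, μ * Real.exp (-μ * s) * (k * b + ε₀) := by
          apply MeasureTheory.norm_integral_le_of_norm_le
            (IntegrableOn.mono_set
              (((exp_neg_integrableOn_Ioi (0:ℝ) hμ0).const_mul μ).mul_const (k * b + ε₀))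
              Ioc_subset_Ioi_self)
          filter_upwards [MeasureTheory.ae_restrict_mem measurableSet_Ioc] with s hs
          rw [hh]
          rw [Real.norm_eq_abs, abs_mul, abs_mul, abs_of_pos hμ0, abs_of_pos (Real.exp_pos _),
            mul_assoc, mul_assoc]
          apply mul_le_mul_of_nonneg_left ?_ hμ0.le
          apply mul_le_mul_of_nonneg_left ?_ (Real.exp_pos _).le
          calc |psi A a₀ C μ (x + s) (r (x + s)) - L|
              ≤ k * |r (x + s) - L| + |A (x + s) + L| / (μ * a₀) :=
                psi_dist_const hA₀ haC hμ hAlb hAub hL (x + s) (r (x + s))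
            _ ≤ k * b + ε₀ := by
                have h1 := hbb (x + s) (by simp [hw] at hs ⊢; linarith [hs.2])
                have h2 := hη (x + s) (by simp [hw] at hs ⊢; linarith [hs.2])
                have h3 : |A (x + s) + L| / (μ * a₀) ≤ ε₀ := by
                  rw [div_le_iff₀ (by positivity)]
                  calc |A (x + s) + L| ≤ μ * a₀ * ε₀ := h2
                    _ = ε₀ * (μ * a₀) := by ring
                exact add_le_add (mul_le_mul_of_nonneg_left h1 hk0) h3
      _ ≤ ∫ s in Ioi (0:ℝ), μ * Real.exp (-μ * s) * (k * b + ε₀) := by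
          apply MeasureTheory.setIntegral_mono_set
            (((exp_neg_integrableOn_Ioi (0:ℝ) hμ0).const_mul μ).mul_const (k * b + ε₀))
          · filter_upwards with s
            positivity
          · exact HasSubset.Subset.eventuallyLE Ioc_subset_Ioi_self
      _ = Real.exp (-μ * 0) * (k * b + ε₀) := expker_integral_mul hμ0 0 _
      _ = k * b + ε₀ := by simp
  have hbound2 : |∫ s in Ioi w, h s| ≤ ε₀ := by
    rw [← Real.norm_eq_abs]
    calc ‖∫ s in Ioi w, h s‖
        ≤ ∫ s in Ioi w, μ * Real.exp (-μ * s) * (C - a₀) := by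
          apply MeasureTheory.norm_integral_le_of_norm_le
            (((exp_neg_integrableOn_Ioi w hμ0).const_mul μ).mul_const (C - a₀))
          filter_upwards with s
          rw [hh]
          rw [Real.norm_eq_abs, abs_mul, abs_mul, abs_of_pos hμ0, abs_of_pos (Real.exp_pos _),
            mul_assoc, mul_assoc]
          apply mul_le_mul_of_nonneg_left ?_ hμ0.le
          apply mul_le_mul_of_nonneg_left ?_ (Real.exp_pos _).le
          have hm := psi_mem hA₀ haC hμ hAlb hAub (x + s) (r (x + s))
          rw [abs_le]; constructor <;> [linarith [hm.1, hL.2]; linarith [hm.2, hL.1]]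
      _ = Real.exp (-μ * w) * (C - a₀) := expker_integral_mul hμ0 w _
      _ ≤ Real.exp (-μ * R) * (C - a₀) := by
          apply mul_le_mul_of_nonneg_right (Real.exp_le_exp.mpr (by nlinarith)) (by linarith [haC])
      _ ≤ ε₀ := by rw [mul_comm]; exact hRe
  calc |r x - L| = |∫ s in Ioi (0:ℝ), h s| := by
        rw [r_sub_const hA hA₀ haC hμ hAlb hAub hrcont hfix hL x]
    _ = |(∫ s in Ioc (0:ℝ) w, h s) + ∫ s in Ioi w, h s| := by rw [hsplit]
    _ ≤ |∫ s in Ioc (0:ℝ) w, h s| + |∫ s in Ioi w, h s| := abs_add_le _ _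
    _ ≤ (k * b + ε₀) + ε₀ := add_le_add hbound1 hbound2
    _ = k * b + 2 * ε₀ := by ring

lemma tail_iter_top {L ε₀ N : ℝ} (hL : L ∈ Icc a₀ C) (hε₀ : 0 ≤ ε₀)
    (hη : ∀ t, N ≤ t → |A t + L| ≤ μ * a₀ * ε₀) (n : ℕ) :
    ∀ x, N ≤ x → |r x - L| ≤ (1 - a₀ / (μ * C ^ 2)) ^ n * (C - a₀) + ε₀ * (μ * C ^ 2 / a₀) := by
  have hμ0 : 0 < μ := mu_pos hA₀ haC hμ
  have hC0 : 0 < C := lt_of_lt_of_le hA₀ haC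
  have hk0 : 0 ≤ 1 - a₀ / (μ * C ^ 2) :=
    (factor_bounds hA₀ haC hμ hAlb hAub (t := 0) ⟨le_refl _, haC⟩ ⟨le_refl _, haC⟩).1.trans
    (factor_bounds hA₀ haC hμ hAlb hAub (t := 0) ⟨le_refl _, haC⟩ ⟨le_refl _, haC⟩).2
  induction n with
  | zero =>
    intro x hx
    have := r_dist_le hA hA₀ haC hμ hAlb hAub hrcont hfix hL x
    have h2 : 0 ≤ ε₀ * (μ * C ^ 2 / a₀) := by positivity
    simpa using by linarith
  | succ n ih =>
    intro x hx
    have hb : 0 ≤ (1 - a₀ / (μ * C ^ 2)) ^ n * (C - a₀) + ε₀ * (μ * C ^ 2 / a₀) := by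
      have : (0:ℝ) ≤ (1 - a₀ / (μ * C ^ 2)) ^ n * (C - a₀) :=
        mul_nonneg (pow_nonneg hk0 n) (by linarith)
      have h2 : 0 ≤ ε₀ * (μ * C ^ 2 / a₀) := by positivity
      linarith
    have hstep := tail_step_top hA hA₀ haC hμ hAlb hAub hrcont hfix hL hb hε₀ ih hη x hx
    have hfield : (1 - a₀ / (μ * C ^ 2)) * (μ * C ^ 2 / a₀) + 1 = μ * C ^ 2 / a₀ := by
      field_simp
      ring
    calc |r x - L| ≤ (1 - a₀ / (μ * C ^ 2)) *
          ((1 - a₀ / (μ * C ^ 2)) ^ n * (C - a₀) + ε₀ * (μ * C ^ 2 / a₀)) + ε₀ := hstep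
      _ = (1 - a₀ / (μ * C ^ 2)) ^ (n + 1) * (C - a₀)
          + ε₀ * ((1 - a₀ / (μ * C ^ 2)) * (μ * C ^ 2 / a₀) + 1) := by ring
      _ = (1 - a₀ / (μ * C ^ 2)) ^ (n + 1) * (C - a₀) + ε₀ * (μ * C ^ 2 / a₀) := by
          rw [hfield]

lemma tail_iter_bot {L ε₀ N R : ℝ} (hL : L ∈ Icc a₀ C) (hε₀ : 0 ≤ ε₀) (hR : 0 < R)
    (hRe : (C - a₀) * Real.exp (-μ * R) ≤ ε₀)
    (hη : ∀ t, t ≤ N → |A t + L| ≤ μ * a₀ * ε₀) (n : ℕ) :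
    ∀ x, x ≤ N - n * R →
      |r x - L| ≤ (1 - a₀ / (μ * C ^ 2)) ^ n * (C - a₀) + 2 * ε₀ * (μ * C ^ 2 / a₀) := by
  have hμ0 : 0 < μ := mu_pos hA₀ haC hμ
  have hC0 : 0 < C := lt_of_lt_of_le hA₀ haC
  have hk0 : 0 ≤ 1 - a₀ / (μ * C ^ 2) :=
    (factor_bounds hA₀ haC hμ hAlb hAub (t := 0) ⟨le_refl _, haC⟩ ⟨le_refl _, haC⟩).1.trans
    (factor_bounds hA₀ haC hμ hAlb hAub (t := 0) ⟨le_refl _, haC⟩ ⟨le_refl _, haC⟩).2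
  induction n with
  | zero =>
    intro x hx
    have := r_dist_le hA hA₀ haC hμ hAlb hAub hrcont hfix hL x
    have h2 : 0 ≤ 2 * ε₀ * (μ * C ^ 2 / a₀) := by positivity
    simpa using by linarith
  | succ n ih =>
    intro x hx
    have hb : 0 ≤ (1 - a₀ / (μ * C ^ 2)) ^ n * (C - a₀) + 2 * ε₀ * (μ * C ^ 2 / a₀) := by
      have : (0:ℝ) ≤ (1 - a₀ / (μ * C ^ 2)) ^ n * (C - a₀) :=
        mul_nonneg (pow_nonneg hk0 n) (by linarith)
      have h2 : 0 ≤ 2 * ε₀ * (μ * C ^ 2 / a₀) := by positivity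
      linarith
    have hη' : ∀ t, t ≤ N - n * R → |A t + L| ≤ μ * a₀ * ε₀ := by
      intro t ht
      apply hη t
      have : (0:ℝ) ≤ n * R := by positivity
      linarith
    have hstep := tail_step_bot hA hA₀ haC hμ hAlb hAub hrcont hfix hL hb hε₀ hR hRe ih hη'
      x (by push_cast at hx ⊢; linarith)
    have hfield : (1 - a₀ / (μ * C ^ 2)) * (μ * C ^ 2 / a₀) + 1 = μ * C ^ 2 / a₀ := by
      field_simp
      ring
    calc |r x - L| ≤ (1 - a₀ / (μ * C ^ 2)) *
          ((1 - a₀ / (μ * C ^ 2)) ^ n * (C - a₀) + 2 * ε₀ * (μ * C ^ 2 / a₀)) + 2 * ε₀ := hstep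
      _ = (1 - a₀ / (μ * C ^ 2)) ^ (n + 1) * (C - a₀)
          + 2 * ε₀ * ((1 - a₀ / (μ * C ^ 2)) * (μ * C ^ 2 / a₀) + 1) := by ring
      _ = (1 - a₀ / (μ * C ^ 2)) ^ (n + 1) * (C - a₀) + 2 * ε₀ * (μ * C ^ 2 / a₀) := by
          rw [hfield]

end Fixed
end AcousticBH

open Set Real AcousticBH
open scoped BoundedContinuousFunction

/-- Theorem 4.1 (existence of the outer black hole horizon): if `A ≤ -a₀ < 0` is C¹
with `∫ (1+|t|)|A'(t)| dt < ∞` and limits `A(±∞)`, then the ODE `r' = A(x)/r + 1`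
has a positive bounded global solution `r₀` with `r₀(x) → -A(±∞) = |A(±∞)|` as
`x → ±∞`. -/
theorem acoustic_black_hole_horizon_exists (A : ℝ → ℝ) (hA : ContDiff ℝ 1 A)
    (a₀ : ℝ) (ha₀ : 0 < a₀) (hAneg : ∀ x, A x ≤ -a₀)
    (hint : Integrable (fun t => (1 + |t|) * |deriv A t|))
    (Aplus Aminus : ℝ)
    (hplus : Tendsto A atTop (nhds Aplus))
    (hminus : Tendsto A atBot (nhds Aminus)) :
    ∃ r₀ : ℝ → ℝ,
      (∀ x, 0 < r₀ x) ∧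
      (∃ M, ∀ x, r₀ x ≤ M) ∧
      (∀ x, HasDerivAt r₀ (A x / r₀ x + 1) x) ∧
      Tendsto r₀ atTop (nhds (-Aplus)) ∧
      Tendsto r₀ atBot (nhds (-Aminus)) := by
  classical
  have hAc : Continuous A := hA.continuous
  have hder : Continuous (deriv A) := hA.continuous_deriv le_rfl
  have hdint : Integrable (fun t => |deriv A t|) := by
    refine hint.mono' hder.abs.aestronglyMeasurable ?_
    filter_upwards with t
    rw [Real.norm_eq_abs, abs_abs]
    nlinarith [abs_nonneg t, abs_nonneg (deriv A t)]
  set C : ℝ := |A 0| + ∫ t, |deriv A t| with hCdef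
  have hInn : 0 ≤ ∫ t, |deriv A t| := integral_nonneg fun t => abs_nonneg _
  have haC : a₀ ≤ C := by
    have h0 : a₀ ≤ |A 0| := by
      have := hAneg 0
      rw [abs_of_neg (by linarith)]; linarith
    rw [hCdef]; linarith
  have hC0 : 0 < C := lt_of_lt_of_le ha₀ haC
  have habs : ∀ x, |A x| ≤ C := by
    intro x
    have hFTC : ∫ t in (0:ℝ)..x, deriv A t = A x - A 0 :=
      intervalIntegral.integral_deriv_eq_sub
        (fun t _ => (hA.differentiable one_ne_zero).differentiableAt)
        (hder.intervalIntegrable 0 x)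
    have hb : |∫ t in (0:ℝ)..x, deriv A t| ≤ ∫ t, |deriv A t| := by
      have key : ∀ u v : ℝ, u ≤ v → |∫ t in u..v, deriv A t| ≤ ∫ t, |deriv A t| := by
        intro u v huv
        rw [intervalIntegral.integral_of_le huv]
        calc |∫ t in Ioc u v, deriv A t| ≤ ∫ t in Ioc u v, |deriv A t| := by
              rw [← Real.norm_eq_abs]
              refine (norm_integral_le_integral_norm _).trans_eq ?_
              simp [Real.norm_eq_abs]
          _ ≤ ∫ t, |deriv A t| :=
              setIntegral_le_integral hdint (Eventually.of_forall fun t => abs_nonneg _)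
      rcases le_total 0 x with h | h
      · exact key 0 x h
      · rw [intervalIntegral.integral_symm, abs_neg]
        exact key x 0 h
    have h1 : |A x - A 0| ≤ ∫ t, |deriv A t| := hFTC ▸ hb
    calc |A x| = |A 0 + (A x - A 0)| := by ring_nf
      _ ≤ |A 0| + |A x - A 0| := abs_add_le _ _
      _ ≤ C := by rw [hCdef]; linarith
  have hAlb : ∀ x, -C ≤ A x := fun x => (abs_le.mp (habs x)).1
  set μ : ℝ := C / a₀ ^ 2 + 1 with hμdef
  have hμ : C ≤ μ * a₀ ^ 2 := by
    rw [hμdef]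
    have : (C / a₀ ^ 2 + 1) * a₀ ^ 2 = C + a₀ ^ 2 := by field_simp
    rw [this]; nlinarith [sq_nonneg a₀]
  have hμ0 : 0 < μ := mu_pos ha₀ haC hμ
  set k : ℝ := 1 - a₀ / (μ * C ^ 2) with hkdef
  have hk0 : 0 ≤ k :=
    (factor_bounds ha₀ haC hμ hAlb hAneg (t := 0) ⟨le_refl _, haC⟩ ⟨le_refl _, haC⟩).1.trans
    (factor_bounds ha₀ haC hμ hAlb hAneg (t := 0) ⟨le_refl _, haC⟩ ⟨le_refl _, haC⟩).2
  have hk1 : k < 1 := by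
    rw [hkdef]
    have : 0 < a₀ / (μ * C ^ 2) := by positivity
    linarith
  -- the fixed point operator on bounded continuous functions
  let T : (ℝ →ᵇ ℝ) → (ℝ →ᵇ ℝ) := fun f =>
    BoundedContinuousFunction.ofNormedAddCommGroup (Tfun A a₀ C μ f)
      (Tfun_continuous hAc ha₀ haC hμ hAlb hAneg f.continuous) C
      (fun x => by
        have h := Tfun_mem hAc ha₀ haC hμ hAlb hAneg f.continuous x
        rw [Real.norm_eq_abs, abs_of_pos (lt_of_lt_of_le ha₀ h.1)]; exact h.2)
  have hTapp : ∀ (f : ℝ →ᵇ ℝ) (x : ℝ), T f x = Tfun A a₀ C μ f x := fun f x => rfl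
  have hcontr : ContractingWith ⟨k, hk0⟩ T := by
    constructor
    · exact_mod_cast hk1
    · apply LipschitzWith.of_dist_le_mul
      intro f g
      rw [BoundedContinuousFunction.dist_le (mul_nonneg (by exact_mod_cast hk0) dist_nonneg)]
      intro x
      rw [Real.dist_eq, hTapp, hTapp]
      exact Tfun_dist hAc ha₀ haC hμ hAlb hAneg f.continuous g.continuous dist_nonneg
        (fun t => by rw [← Real.dist_eq]; exact BoundedContinuousFunction.dist_coe_le_dist t) x
  let rb : ℝ →ᵇ ℝ := ContractingWith.fixedPoint T hcontr
  have hfixb : T rb = rb := hcontr.fixedPoint_isFixedPt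
  have hfix : ∀ x, rb x = Tfun A a₀ C μ rb x := by
    intro x
    conv_lhs => rw [← hfixb]
    exact hTapp rb x
  have hrcont : Continuous rb := rb.continuous
  have hrmem : ∀ x, rb x ∈ Icc a₀ C := r_mem hAc ha₀ haC hμ hAlb hAneg hrcont hfix
  -- limits are inside [a₀, C]
  have hLp : -Aplus ∈ Icc a₀ C := by
    constructor
    · have : Aplus ≤ -a₀ := le_of_tendsto hplus (Eventually.of_forall hAneg)
      linarith
    · have : -C ≤ Aplus := ge_of_tendsto hplus (Eventually.of_forall hAlb)
      linarith
  have hLm : -Aminus ∈ Icc a₀ C := by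
    constructor
    · have : Aminus ≤ -a₀ := le_of_tendsto hminus (Eventually.of_forall hAneg)
      linarith
    · have : -C ≤ Aminus := ge_of_tendsto hminus (Eventually.of_forall hAlb)
      linarith
  set P : ℝ := μ * C ^ 2 / a₀ with hPdef
  have hP0 : 0 < P := by positivity
  refine ⟨fun x => rb x, fun x => lt_of_lt_of_le ha₀ (hrmem x).1, ⟨C, fun x => (hrmem x).2⟩,
    fun x => r_hasDeriv hAc ha₀ haC hμ hAlb hAneg hrcont hfix x, ?_, ?_⟩
  · -- limit at +∞
    rw [Metric.tendsto_atTop]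
    intro ε hε
    set ε₀ : ℝ := ε / (4 * P) with he0
    have hε₀ : 0 < ε₀ := by positivity
    obtain ⟨N, hN⟩ := (Metric.tendsto_atTop.mp hplus) (μ * a₀ * ε₀) (by positivity)
    have hη : ∀ t, N ≤ t → |A t + -Aplus| ≤ μ * a₀ * ε₀ := by
      intro t ht
      have := hN t ht
      rw [Real.dist_eq] at this
      rw [show A t + -Aplus = A t - Aplus by ring]
      linarith
    obtain ⟨n, hn⟩ := ((tendsto_pow_atTop_nhds_zero_of_lt_one hk0 hk1).eventually
      (gt_mem_nhds (div_pos hε (by linarith : (0:ℝ) < 2 * (C - a₀ + 1))))).exists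
    refine ⟨N, fun x hx => ?_⟩
    have hiter := tail_iter_top hAc ha₀ haC hμ hAlb hAneg hrcont hfix hLp hε₀.le hη n x hx
    rw [← hkdef, ← hPdef] at hiter
    have h1 : k ^ n * (C - a₀) ≤ k ^ n * (C - a₀ + 1) :=
      mul_le_mul_of_nonneg_left (by linarith) (pow_nonneg hk0 n)
    have h2 : k ^ n * (C - a₀ + 1) < ε / 2 := by
      have h4 : (0:ℝ) < C - a₀ + 1 := by linarith
      have h5 : (ε / (2 * (C - a₀ + 1))) * (C - a₀ + 1) = ε / 2 := by
        rw [div_mul_eq_mul_div, div_eq_div_iff (by linarith) (by norm_num)]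
        ring
      rw [← h5]
      exact mul_lt_mul_of_pos_right hn h4
    have h3 : ε₀ * P = ε / 4 := by rw [he0]; field_simp
    clear_value rb T ε₀ P k μ C
    rw [Real.dist_eq]
    calc |rb x - -Aplus| ≤ k ^ n * (C - a₀) + ε₀ * P := hiter
      _ < ε := by linarith
  · -- limit at -∞
    rw [Metric.tendsto_nhds]
    intro ε hε
    rw [eventually_atBot]
    set ε₀ : ℝ := ε / (8 * P) with he0
    have hε₀ : 0 < ε₀ := by positivity
    have hev := (Metric.tendsto_nhds.mp hminus) (μ * a₀ * ε₀) (by positivity)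
    obtain ⟨N, hN⟩ := eventually_atBot.mp hev
    have hη : ∀ t, t ≤ N → |A t + -Aminus| ≤ μ * a₀ * ε₀ := by
      intro t ht
      have := hN t ht
      rw [Real.dist_eq] at this
      rw [show A t + -Aminus = A t - Aminus by ring]
      linarith
    -- choose R with (C - a₀) * exp (-μ R) ≤ ε₀
    set Q : ℝ := (C - a₀ + 1) / ε₀ with hQdef
    have hQ0 : 0 < Q := div_pos (by linarith) hε₀
    set R : ℝ := max 1 (Real.log Q / μ) with hRdef
    have hR : 0 < R := lt_of_lt_of_le one_pos (le_max_left _ _)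
    have hRe : (C - a₀) * Real.exp (-μ * R) ≤ ε₀ := by
      have hlog : Real.log Q ≤ μ * R := by
        have h1 : Real.log Q / μ ≤ R := le_max_right _ _
        calc Real.log Q = μ * (Real.log Q / μ) := by field_simp
          _ ≤ μ * R := mul_le_mul_of_nonneg_left h1 hμ0.le
      have hexp : Real.exp (-μ * R) ≤ Q⁻¹ := by
        rw [← Real.exp_log hQ0, ← Real.exp_neg]
        exact Real.exp_le_exp.mpr (by linarith)
      have hQinv : Q⁻¹ = ε₀ / (C - a₀ + 1) := by
        rw [hQdef]; field_simp
      calc (C - a₀) * Real.exp (-μ * R) ≤ (C - a₀ + 1) * Real.exp (-μ * R) := by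
            apply mul_le_mul_of_nonneg_right (by linarith) (Real.exp_pos _).le
        _ ≤ (C - a₀ + 1) * Q⁻¹ := mul_le_mul_of_nonneg_left hexp (by linarith)
        _ = ε₀ := by
            rw [hQinv, mul_div_assoc']
            exact mul_div_cancel_left₀ ε₀ (by linarith : (0:ℝ) < C - a₀ + 1).ne'
    obtain ⟨n, hn⟩ := ((tendsto_pow_atTop_nhds_zero_of_lt_one hk0 hk1).eventually
      (gt_mem_nhds (div_pos hε (by linarith : (0:ℝ) < 2 * (C - a₀ + 1))))).exists
    refine ⟨N - n * R, fun x hx => ?_⟩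
    have hiter := tail_iter_bot hAc ha₀ haC hμ hAlb hAneg hrcont hfix hLm hε₀.le hR hRe hη n x hx
    rw [← hkdef, ← hPdef] at hiter
    have h1 : k ^ n * (C - a₀) ≤ k ^ n * (C - a₀ + 1) :=
      mul_le_mul_of_nonneg_left (by linarith) (pow_nonneg hk0 n)
    have h2 : k ^ n * (C - a₀ + 1) < ε / 2 := by
      have h4 : (0:ℝ) < C - a₀ + 1 := by linarith
      have h5 : (ε / (2 * (C - a₀ + 1))) * (C - a₀ + 1) = ε / 2 := by
        rw [div_mul_eq_mul_div, div_eq_div_iff (by linarith) (by norm_num)]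
        ring
      rw [← h5]
      exact mul_lt_mul_of_pos_right hn h4
    have h3 : 2 * ε₀ * P = ε / 4 := by rw [he0]; field_simp; ring
    clear_value rb T ε₀ P k μ C
    rw [Real.dist_eq]
    calc |rb x - -Aminus| ≤ k ^ n * (C - a₀) + 2 * ε₀ * P := hiter
      _ < ε := by linarith
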